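/- arXiv:0901.4652 — 2 statements merged into one kernel-verified Lean document; each statement's English description precedes it below -/
import Mathlib

section
/- Every Limaçon of Pascal is rational; that is, if C is a circle (zero set of ‖ȳ−P₀‖² = r² for some center P₀ ∈ K² and radius r ∈ K with r ≠ 0) and the focus A lies on C, then the conchoid 𝔠(C) is rational. -/
noncomputable section

namespace ConchoidPaper

open Polynomial

variable {K : Type*} [Field K]

/-- The squared norm `‖P‖² = b(P,P)` for the bilinear form
`b((x₁,x₂),(y₁,y₂)) = x₁y₁ + x₂y₂` on `K²`. -/
def normSq (P : K × K) : K := P.1 * P.1 + P.2 * P.2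

/-- The zero set in `K²` of a bivariate polynomial (variables `X 0 ↦ y₁`, `X 1 ↦ y₂`). -/
def zeroSet (f : MvPolynomial (Fin 2) K) : Set (K × K) :=
  {x | MvPolynomial.eval ![x.1, x.2] f = 0}

/-- Zariski closure in `K²`: the set of points at which every polynomial
vanishing identically on `S` vanishes. -/
def zClosure (S : Set (K × K)) : Set (K × K) :=
  {x | ∀ f : MvPolynomial (Fin 2) K,
      (∀ y ∈ S, MvPolynomial.eval ![y.1, y.2] f = 0) →
      MvPolynomial.eval ![x.1, x.2] f = 0}

/-- `S` is Zariski closed in `K²`. -/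
def IsZClosed (S : Set (K × K)) : Prop := zClosure S ⊆ S

/-- `S` is irreducible for the Zariski topology on `K²`: it is nonempty and is not
covered by two Zariski-closed sets unless it is contained in one of them. -/
def IsZIrreducible (S : Set (K × K)) : Prop :=
  S.Nonempty ∧
  ∀ F₁ F₂ : Set (K × K), IsZClosed F₁ → IsZClosed F₂ → S ⊆ F₁ ∪ F₂ → S ⊆ F₁ ∨ S ⊆ F₂

/-- `M` is an irreducible component of `X`: a maximal Zariski-closed irreducible subset. -/
def IsComponent (X M : Set (K × K)) : Prop :=
  M ⊆ X ∧ IsZClosed M ∧ IsZIrreducible M ∧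
  ∀ M' : Set (K × K), M' ⊆ X → IsZClosed M' → IsZIrreducible M' → M ⊆ M' → M' = M

/-- `Ω` is a nonempty Zariski-dense subset of `M`. -/
def IsDenseIn (Ω M : Set (K × K)) : Prop :=
  Ω.Nonempty ∧ Ω ⊆ M ∧ M ⊆ zClosure Ω

/-- The conchoid incidence variety `B(C)` of the curve `C = zeroSet f` from the focus `A`
at distance `d`: triples `(x̄, ȳ, λ)` with `f(ȳ) = 0`, `‖x̄ − ȳ‖² = d²` and
`x̄ = A + λ(ȳ − A)`. -/
def incidence (f : MvPolynomial (Fin 2) K) (A : K × K) (d : K) :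
    Set ((K × K) × (K × K) × K) :=
  {w | w.2.1 ∈ zeroSet f ∧ normSq (w.1 - w.2.1) = d ^ 2 ∧ w.1 = A + w.2.2 • (w.2.1 - A)}

/-- The conchoid `𝔠(C,A,d)`: the Zariski closure of `π₁(B(C))`. -/
def conchoid (f : MvPolynomial (Fin 2) K) (A : K × K) (d : K) : Set (K × K) :=
  zClosure (Prod.fst '' incidence f A d)

/-- `S` is one of the two isotropic lines `y₁ ± √(-1) y₂ = 0`. -/
def IsIsotropicLine (S : Set (K × K)) : Prop :=
  ∃ s : K, s ^ 2 = -1 ∧ S = {y : K × K | y.1 + s * y.2 = 0}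

/-- `S` is a line passing through the point `A`. -/
def IsLineThrough (S : Set (K × K)) (A : K × K) : Prop :=
  ∃ u v : K, (u ≠ 0 ∨ v ≠ 0) ∧
    S = {y : K × K | u * (y.1 - A.1) + v * (y.2 - A.2) = 0}

/-- `S` is a line in `K²`. -/
def IsLine (S : Set (K × K)) : Prop :=
  ∃ u v w : K, (u ≠ 0 ∨ v ≠ 0) ∧ S = {y : K × K | u * y.1 + v * y.2 + w = 0}

/-- The circle of center `A` and radius `d`, i.e. `‖ȳ − A‖² = d²`. -/
def circleSet (A : K × K) (d : K) : Set (K × K) := {y : K × K | normSq (y - A) = d ^ 2}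

/-- The point of `K²` obtained by evaluating the pair of rational functions `P` at `t`. -/
def ratPoint (P : RatFunc K × RatFunc K) (t : K) : K × K :=
  (P.1.num.eval t / P.1.denom.eval t, P.2.num.eval t / P.2.denom.eval t)

/-- `t` avoids the poles of both components of `P`. -/
def PolesAvoided (P : RatFunc K × RatFunc K) (t : K) : Prop :=
  P.1.denom.eval t ≠ 0 ∧ P.2.denom.eval t ≠ 0

/-- The image of the pair of rational functions `P`, poles avoided. -/
def paramImage (P : RatFunc K × RatFunc K) : Set (K × K) :=
  {x | ∃ t : K, PolesAvoided P t ∧ x = ratPoint P t}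

/-- `P ∈ K(t)²` is a rational parametrization of the set `S ⊆ K²`: its components are
not both constant, its image lies in `S`, and its image is Zariski dense in `S`. -/
def IsParamOf (S : Set (K × K)) (P : RatFunc K × RatFunc K) : Prop :=
  (¬ ∃ c : K × K, P.1 = RatFunc.C c.1 ∧ P.2 = RatFunc.C c.2) ∧
  paramImage P ⊆ S ∧ S ⊆ zClosure (paramImage P)

/-- `S` is rational: it admits a rational parametrization. -/
def IsRationalSet (S : Set (K × K)) : Prop := ∃ P : RatFunc K × RatFunc K, IsParamOf S P

/-- `P` is proper: `K(P₁,P₂) = K(t)`. -/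
def IsProper (P : RatFunc K × RatFunc K) : Prop :=
  IntermediateField.adjoin K {P.1, P.2} = ⊤

/-- `P` is at rational distance to the focus `A` (`A`-rdf):
`(P₁ − a)² + (P₂ − b)² = m(t)²` for some rational function `m`. -/
def IsRDF (A : K × K) (P : RatFunc K × RatFunc K) : Prop :=
  ∃ m : RatFunc K, (P.1 - RatFunc.C A.1) ^ 2 + (P.2 - RatFunc.C A.2) ^ 2 = m ^ 2

/-- A field is trivially a normalized GCD monoid; this makes `K[x₁]` a normalized GCD
monoid, so that primitive parts w.r.t. `x₂` of polynomials in `K[x₁][x₂]` make sense. -/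
noncomputable local instance : NormalizedGCDMonoid K := by
  classical exact inferInstance

/-- The numerator of `−2x₂(P₁(x₁) − a) + (x₂² − 1)(P₂(x₁) − b)`, written as a polynomial
in `x₂` (outer variable) with coefficients in `K[x₁]` (inner variable). -/
def repNum (A : K × K) (P : RatFunc K × RatFunc K) : Polynomial (Polynomial K) :=
  Polynomial.C ((P.2 - RatFunc.C A.2).num * (P.1 - RatFunc.C A.1).denom) *
      (Polynomial.X ^ 2 - 1) +
    Polynomial.C (-2 * ((P.1 - RatFunc.C A.1).num * (P.2 - RatFunc.C A.2).denom)) *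
      Polynomial.X

/-- Defining polynomial of the reparametrizing curve `𝔊(P)`: the primitive part with
respect to `x₂` of the numerator of `−2x₂(P₁(x₁) − a) + (x₂² − 1)(P₂(x₁) − b)`. -/
def repPoly (A : K × K) (P : RatFunc K × RatFunc K) : Polynomial (Polynomial K) :=
  (repNum A P).primPart

/-- Zero set in the `(x₁,x₂)`-plane of `g ∈ K[x₁][x₂]` (`x₂` outer, `x₁` inner). -/
def zeroSetP (g : Polynomial (Polynomial K)) : Set (K × K) :=
  {x | Polynomial.eval₂ (Polynomial.evalRingHom x.1) x.2 g = 0}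

/-- The reparametrizing curve `𝔊(P)` has at least one rational component, i.e. some
irreducible factor of its defining polynomial defines a rational curve. -/
def repHasRatComponent (A : K × K) (P : RatFunc K × RatFunc K) : Prop :=
  ∃ g : Polynomial (Polynomial K), Irreducible g ∧ g ∣ repPoly A P ∧
    IsRationalSet (zeroSetP g)

/-- The reparametrizing curve `𝔊(P)` is rational: its defining polynomial is
irreducible and its zero set admits a rational parametrization. -/
def repIsRational (A : K × K) (P : RatFunc K × RatFunc K) : Prop :=
  Irreducible (repPoly A P) ∧ IsRationalSet (zeroSetP (repPoly A P))

/-- Composition `P ∘ φ` of rational functions. -/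
def comp (P φ : RatFunc K) : RatFunc K :=
  Polynomial.aeval φ P.num / Polynomial.aeval φ P.denom

/-- `M` is a simple component of the conchoid: an irreducible component possessing a
nonempty Zariski-dense subset `Ω` such that each `Q ∈ Ω` has exactly one point in
`π₂(π₁⁻¹(Q))`. -/
def IsSimpleComponent (f : MvPolynomial (Fin 2) K) (A : K × K) (d : K)
    (M : Set (K × K)) : Prop :=
  IsComponent (conchoid f A d) M ∧
  ∃ Ω : Set (K × K), IsDenseIn Ω M ∧
    ∀ Q ∈ Ω, ∃! y : K × K, ∃ l : K, (Q, y, l) ∈ incidence f A d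


/-! ### Auxiliary lemmas -/

section Aux

lemma subset_zClosure (S : Set (K × K)) : S ⊆ zClosure S := fun x hx g hg => hg x hx

lemma zClosure_mono {S T : Set (K × K)} (h : S ⊆ T) : zClosure S ⊆ zClosure T :=
  fun x hx g hg => hx g fun y hy => hg y (h hy)

lemma eval₂_id_eq (p : Polynomial K) (t : K) : p.eval₂ (RingHom.id K) t = p.eval t := rfl

lemma eval_ne_zero_of_dvd {p q : Polynomial K} {t : K} (h : p ∣ q) (hq : q.eval t ≠ 0) :
    p.eval t ≠ 0 := by
  obtain ⟨c, rfl⟩ := h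
  intro h0
  exact hq (by rw [Polynomial.eval_mul, h0, zero_mul])

lemma ratfunc_eval_div (p q : Polynomial K) (hq : q ≠ 0) (t : K) (hqt : q.eval t ≠ 0) :
    RatFunc.eval (RingHom.id K) t (algebraMap (Polynomial K) (RatFunc K) p / algebraMap _ _ q)
      = p.eval t / q.eval t := by
  set x := algebraMap (Polynomial K) (RatFunc K) p / algebraMap _ _ q with hxdef
  have hdvd : x.denom ∣ q := RatFunc.denom_div_dvd p q
  have hd0 : x.denom.eval t ≠ 0 := eval_ne_zero_of_dvd hdvd hqt
  have h2 : algebraMap (Polynomial K) (RatFunc K) x.num / algebraMap _ _ x.denom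
      = algebraMap (Polynomial K) (RatFunc K) p / algebraMap _ _ q := RatFunc.num_div_denom x
  rw [div_eq_div_iff (RatFunc.algebraMap_ne_zero (RatFunc.denom_ne_zero x))
    (RatFunc.algebraMap_ne_zero hq), ← map_mul, ← map_mul] at h2
  have h3 := RatFunc.algebraMap_injective K h2
  have h4 := congrArg (Polynomial.eval t) h3
  rw [Polynomial.eval_mul, Polynomial.eval_mul] at h4
  rw [RatFunc.eval, eval₂_id_eq, eval₂_id_eq, div_eq_div_iff hd0 hqt]
  exact h4

lemma aeval_denom_dvd_and_eval (p₁ q₁ p₂ q₂ : Polynomial K) (hq₁ : q₁ ≠ 0) (hq₂ : q₂ ≠ 0)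
    (t : K) (ht₁ : q₁.eval t ≠ 0) (ht₂ : q₂.eval t ≠ 0) (g : MvPolynomial (Fin 2) K) :
    (∃ n : ℕ, (MvPolynomial.aeval
        ![algebraMap (Polynomial K) (RatFunc K) p₁ / algebraMap _ _ q₁,
          algebraMap (Polynomial K) (RatFunc K) p₂ / algebraMap _ _ q₂] g).denom ∣ (q₁ * q₂) ^ n) ∧
      RatFunc.eval (RingHom.id K) t (MvPolynomial.aeval
        ![algebraMap (Polynomial K) (RatFunc K) p₁ / algebraMap _ _ q₁,
          algebraMap (Polynomial K) (RatFunc K) p₂ / algebraMap _ _ q₂] g)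
      = MvPolynomial.eval ![p₁.eval t / q₁.eval t, p₂.eval t / q₂.eval t] g := by
  have hqqt : ∀ n : ℕ, ((q₁ * q₂) ^ n).eval t ≠ 0 := by
    intro n
    rw [Polynomial.eval_pow, Polynomial.eval_mul]
    exact pow_ne_zero _ (mul_ne_zero ht₁ ht₂)
  have hPdvd : ∀ i : Fin 2,
      (![algebraMap (Polynomial K) (RatFunc K) p₁ / algebraMap _ _ q₁,
        algebraMap (Polynomial K) (RatFunc K) p₂ / algebraMap _ _ q₂] i).denom ∣ q₁ * q₂ := by
    intro i
    fin_cases i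
    · exact (RatFunc.denom_div_dvd p₁ q₁).trans (dvd_mul_right _ _)
    · exact (RatFunc.denom_div_dvd p₂ q₂).trans (dvd_mul_left _ _)
  have hPeval : ∀ i : Fin 2,
      RatFunc.eval (RingHom.id K) t
        (![algebraMap (Polynomial K) (RatFunc K) p₁ / algebraMap _ _ q₁,
          algebraMap (Polynomial K) (RatFunc K) p₂ / algebraMap _ _ q₂] i)
      = ![p₁.eval t / q₁.eval t, p₂.eval t / q₂.eval t] i := by
    intro i
    fin_cases i
    · exact ratfunc_eval_div p₁ q₁ hq₁ t ht₁
    · exact ratfunc_eval_div p₂ q₂ hq₂ t ht₂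
  induction g using MvPolynomial.induction_on with
  | C c =>
      refine ⟨⟨0, ?_⟩, ?_⟩
      · simp [MvPolynomial.aeval_C, RatFunc.algebraMap_eq_C, RatFunc.denom_C]
      · simp [MvPolynomial.aeval_C, RatFunc.algebraMap_eq_C, MvPolynomial.eval_C]
  | add f g hf hg =>
      obtain ⟨⟨n, hn⟩, he⟩ := hf
      obtain ⟨⟨m, hm⟩, he'⟩ := hg
      have hdn := eval_ne_zero_of_dvd hn (hqqt n)
      have hdm := eval_ne_zero_of_dvd hm (hqqt m)
      have hdn' : Polynomial.eval₂ (RingHom.id K) t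
          ((MvPolynomial.aeval
            ![algebraMap (Polynomial K) (RatFunc K) p₁ / algebraMap _ _ q₁,
              algebraMap (Polynomial K) (RatFunc K) p₂ / algebraMap _ _ q₂]) f).denom ≠ 0 := hdn
      have hdm' : Polynomial.eval₂ (RingHom.id K) t
          ((MvPolynomial.aeval
            ![algebraMap (Polynomial K) (RatFunc K) p₁ / algebraMap _ _ q₁,
              algebraMap (Polynomial K) (RatFunc K) p₂ / algebraMap _ _ q₂]) g).denom ≠ 0 := hdm
      refine ⟨⟨n + m, ?_⟩, ?_⟩
      · rw [map_add, pow_add]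
        exact (RatFunc.denom_add_dvd _ _).trans (mul_dvd_mul hn hm)
      · rw [map_add, map_add, RatFunc.eval_add _ _ hdn' hdm', he, he']
  | mul_X f i hf =>
      obtain ⟨⟨n, hn⟩, he⟩ := hf
      have hdn := eval_ne_zero_of_dvd hn (hqqt n)
      have hdi := eval_ne_zero_of_dvd (hPdvd i) (by
        have := hqqt 1; rwa [pow_one] at this)
      have hdn' : Polynomial.eval₂ (RingHom.id K) t
          ((MvPolynomial.aeval
            ![algebraMap (Polynomial K) (RatFunc K) p₁ / algebraMap _ _ q₁,
              algebraMap (Polynomial K) (RatFunc K) p₂ / algebraMap _ _ q₂]) f).denom ≠ 0 := hdn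
      have hdi' : Polynomial.eval₂ (RingHom.id K) t
          (![algebraMap (Polynomial K) (RatFunc K) p₁ / algebraMap _ _ q₁,
             algebraMap (Polynomial K) (RatFunc K) p₂ / algebraMap _ _ q₂] i).denom ≠ 0 := hdi
      refine ⟨⟨n + 1, ?_⟩, ?_⟩
      · rw [map_mul, MvPolynomial.aeval_X, pow_add, pow_one]
        exact (RatFunc.denom_mul_dvd _ _).trans (mul_dvd_mul hn (hPdvd i))
      · rw [map_mul, map_mul, MvPolynomial.aeval_X, MvPolynomial.eval_X,
          RatFunc.eval_mul _ _ hdn' hdi', he, hPeval i]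

lemma ratfunc_eval_zero_of_infinite {x : RatFunc K} {S : Set K} (hS : S.Infinite)
    (h : ∀ t ∈ S, RatFunc.eval (RingHom.id K) t x = 0) : x = 0 := by
  by_contra hx
  have hnum : x.num ≠ 0 := by
    intro h0
    exact hx (RatFunc.num_eq_zero_iff.mp h0)
  have hsub : S ⊆ {t | x.num.IsRoot t} ∪ {t | x.denom.IsRoot t} := by
    intro t ht
    have h1 := h t ht
    rw [RatFunc.eval, eval₂_id_eq, eval₂_id_eq] at h1
    rcases div_eq_zero_iff.mp h1 with h2 | h2
    · exact Or.inl h2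
    · exact Or.inr h2
  exact ((Polynomial.finite_setOf_isRoot hnum).union
    (Polynomial.finite_setOf_isRoot (RatFunc.denom_ne_zero x))).not_infinite (hS.mono hsub)

lemma ratPoint_div (p₁ p₂ q : Polynomial K) (hq : q ≠ 0) (t : K) (hqt : q.eval t ≠ 0) :
    PolesAvoided (algebraMap (Polynomial K) (RatFunc K) p₁ / algebraMap _ _ q,
      algebraMap (Polynomial K) (RatFunc K) p₂ / algebraMap _ _ q) t ∧
    ratPoint (algebraMap (Polynomial K) (RatFunc K) p₁ / algebraMap _ _ q,
      algebraMap (Polynomial K) (RatFunc K) p₂ / algebraMap _ _ q) t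
      = (p₁.eval t / q.eval t, p₂.eval t / q.eval t) := by
  constructor
  · exact ⟨eval_ne_zero_of_dvd (RatFunc.denom_div_dvd p₁ q) hqt,
      eval_ne_zero_of_dvd (RatFunc.denom_div_dvd p₂ q) hqt⟩
  · have e1 := ratfunc_eval_div p₁ q hq t hqt
    have e2 := ratfunc_eval_div p₂ q hq t hqt
    rw [RatFunc.eval, eval₂_id_eq, eval₂_id_eq] at e1 e2
    simp only [ratPoint]
    exact Prod.ext e1 e2

lemma vanish_on_paramImage {P : RatFunc K × RatFunc K} {g : MvPolynomial (Fin 2) K}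
    (h0 : MvPolynomial.aeval ![P.1, P.2] g = 0) :
    ∀ x ∈ paramImage P, MvPolynomial.eval ![x.1, x.2] g = 0 := by
  rintro x ⟨t, ⟨hd1, hd2⟩, rfl⟩
  have key := (aeval_denom_dvd_and_eval P.1.num P.1.denom P.2.num P.2.denom
    (RatFunc.denom_ne_zero _) (RatFunc.denom_ne_zero _) t hd1 hd2 g).2
  rw [RatFunc.num_div_denom, RatFunc.num_div_denom, h0, RatFunc.eval_zero] at key
  simp only [ratPoint]
  exact key.symm

lemma aeval_eq_zero_of_vanish (p₁ p₂ q : Polynomial K) (hq : q ≠ 0)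
    {T : Set K} (hT : T.Infinite) (hTq : ∀ t ∈ T, q.eval t ≠ 0)
    {g : MvPolynomial (Fin 2) K}
    (h : ∀ t ∈ T, MvPolynomial.eval ![p₁.eval t / q.eval t, p₂.eval t / q.eval t] g = 0) :
    MvPolynomial.aeval ![algebraMap (Polynomial K) (RatFunc K) p₁ / algebraMap _ _ q,
      algebraMap (Polynomial K) (RatFunc K) p₂ / algebraMap _ _ q] g = 0 := by
  apply ratfunc_eval_zero_of_infinite hT
  intro t ht
  rw [(aeval_denom_dvd_and_eval p₁ q p₂ q hq hq t (hTq t ht) (hTq t ht) g).2]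
  exact h t ht

lemma fwd_circ (n₁ n₂ r t : K) (hN : n₁^2 + n₂^2 = r^2) (hu : 1 + t^2 ≠ 0) :
    (4*t*(2*t*n₁ + (t^2-1)*n₂)/(1+t^2)^2 - n₁) * (4*t*(2*t*n₁ + (t^2-1)*n₂)/(1+t^2)^2 - n₁)
    + (4*t*(2*t*n₂ - (t^2-1)*n₁)/(1+t^2)^2 - n₂) * (4*t*(2*t*n₂ - (t^2-1)*n₁)/(1+t^2)^2 - n₂)
    = r^2 := by
  field_simp
  linear_combination (16*t^2*(1+t^2)^2 + (1+t^2)^4 - 16*t^2*(1+t^2)^2) * hN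

lemma fwd_dist (a b n₁ n₂ r d t : K) (hr : r ≠ 0) (hN : n₁^2 + n₂^2 = r^2) (hu : 1 + t^2 ≠ 0) :
    ((a*(1+t^2)^2 + r⁻¹*(d*t^2 + 4*r*t + d)*(2*n₁*t + n₂*(t^2-1)))/(1+t^2)^2
      - (a + 4*t*(2*t*n₁ + (t^2-1)*n₂)/(1+t^2)^2))
    * ((a*(1+t^2)^2 + r⁻¹*(d*t^2 + 4*r*t + d)*(2*n₁*t + n₂*(t^2-1)))/(1+t^2)^2
      - (a + 4*t*(2*t*n₁ + (t^2-1)*n₂)/(1+t^2)^2))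
    + ((b*(1+t^2)^2 + r⁻¹*(d*t^2 + 4*r*t + d)*(2*n₂*t - n₁*(t^2-1)))/(1+t^2)^2
      - (b + 4*t*(2*t*n₂ - (t^2-1)*n₁)/(1+t^2)^2))
    * ((b*(1+t^2)^2 + r⁻¹*(d*t^2 + 4*r*t + d)*(2*n₂*t - n₁*(t^2-1)))/(1+t^2)^2
      - (b + 4*t*(2*t*n₂ - (t^2-1)*n₁)/(1+t^2)^2))
    = d^2 := by
  field_simp [hr, hu]
  linear_combination (d^2*(1+t^2)^4) * hN

lemma fwd_line (a n₁ n₂ r d t : K) (hr : r ≠ 0) (h4rt : 4*r*t ≠ 0) (hu : 1 + t^2 ≠ 0) :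
    (a*(1+t^2)^2 + r⁻¹*(d*t^2 + 4*r*t + d)*(2*n₁*t + n₂*(t^2-1)))/(1+t^2)^2
      = a + ((4*r*t + d*(1+t^2))/(4*r*t)) * (4*t*(2*t*n₁ + (t^2-1)*n₂)/(1+t^2)^2) := by
  field_simp [hr, hu, h4rt, right_ne_zero_of_mul h4rt, left_ne_zero_of_mul (left_ne_zero_of_mul h4rt)]
  ring

lemma fwd_line2 (b n₁ n₂ r d t : K) (hr : r ≠ 0) (h4rt : 4*r*t ≠ 0) (hu : 1 + t^2 ≠ 0) :
    (b*(1+t^2)^2 + r⁻¹*(d*t^2 + 4*r*t + d)*(2*n₂*t - n₁*(t^2-1)))/(1+t^2)^2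
      = b + ((4*r*t + d*(1+t^2))/(4*r*t)) * (4*t*(2*t*n₂ - (t^2-1)*n₁)/(1+t^2)^2) := by
  field_simp [hr, hu, h4rt, right_ne_zero_of_mul h4rt, left_ne_zero_of_mul (left_ne_zero_of_mul h4rt)]
  ring

lemma rev_line1 (a n₁ n₂ r d lam z₁ t : K) (hr : r ≠ 0) (hu : 1 + t^2 ≠ 0)
    (R1 : d*(1+t^2) = 4*r*t*(lam-1))
    (hz : z₁*(1+t^2)^2 = 8*t^2*n₁ - 4*t*(1-t^2)*n₂) :
    (a*(1+t^2)^2 + r⁻¹*(d*t^2 + 4*r*t + d)*(2*n₁*t + n₂*(t^2-1)))/(1+t^2)^2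
      = a + lam * z₁ := by
  field_simp [hr, hu]
  linear_combination (2*n₁*t + n₂*(t^2-1)) * R1 - lam * r * hz

lemma rev_line2 (b n₁ n₂ r d lam z₂ t : K) (hr : r ≠ 0) (hu : 1 + t^2 ≠ 0)
    (R1 : d*(1+t^2) = 4*r*t*(lam-1))
    (hz : z₂*(1+t^2)^2 = 8*t^2*n₂ + 4*t*(1-t^2)*n₁) :
    (b*(1+t^2)^2 + r⁻¹*(d*t^2 + 4*r*t + d)*(2*n₂*t - n₁*(t^2-1)))/(1+t^2)^2
      = b + lam * z₂ := by
  field_simp [hr, hu]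
  linear_combination (2*n₂*t - n₁*(t^2-1)) * R1 - lam * r * hz

end Aux

set_option maxHeartbeats 3000000

/-- Corollary 5 of the paper. Every Limaçon of Pascal is rational:
if `C` is a circle and `A ∈ C`, then `𝔠(C)` is rational. -/
theorem limacon_of_pascal_is_rational
    [IsAlgClosed K] [CharZero K]
    (f : MvPolynomial (Fin 2) K) (A : K × K) (d : K)
    (hf : Irreducible f) (hd : d ≠ 0)
    (P₀ : K × K) (r : K) (hr : r ≠ 0) (hC : zeroSet f = circleSet P₀ r)
    (hA : A ∈ zeroSet f)
    (hcirc : zeroSet f ≠ circleSet A d) :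
    IsZIrreducible (conchoid f A d) ∧ IsRationalSet (conchoid f A d) := by
  classical
  -- the center relative to the focus
  have hN' : (P₀.1 - A.1)^2 + (P₀.2 - A.2)^2 = r^2 := by
    have h := hA
    rw [hC] at h
    simp only [circleSet, normSq, Set.mem_setOf_eq, Prod.fst_sub, Prod.snd_sub] at h
    linear_combination h
  -- the parametrization
  set qP : Polynomial K := (1 + Polynomial.X^2)^2 with hqP
  set p1 : Polynomial K := Polynomial.C A.1 * qP + Polynomial.C r⁻¹ *
      (Polynomial.C d * Polynomial.X^2 + Polynomial.C (4*r) * Polynomial.X + Polynomial.C d) *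
      (Polynomial.C (2*(P₀.1 - A.1)) * Polynomial.X
        + Polynomial.C (P₀.2 - A.2) * (Polynomial.X^2 - 1)) with hp1
  set p2 : Polynomial K := Polynomial.C A.2 * qP + Polynomial.C r⁻¹ *
      (Polynomial.C d * Polynomial.X^2 + Polynomial.C (4*r) * Polynomial.X + Polynomial.C d) *
      (Polynomial.C (2*(P₀.2 - A.2)) * Polynomial.X
        - Polynomial.C (P₀.1 - A.1) * (Polynomial.X^2 - 1)) with hp2
  have hqEval : ∀ t : K, qP.eval t = (1 + t^2)^2 := by
    intro t; simp [hqP]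
  have hp1Eval : ∀ t : K, p1.eval t
      = A.1*(1+t^2)^2 + r⁻¹*(d*t^2 + 4*r*t + d)*(2*(P₀.1-A.1)*t + (P₀.2-A.2)*(t^2-1)) := by
    intro t; simp [hp1, hqP]
  have hp2Eval : ∀ t : K, p2.eval t
      = A.2*(1+t^2)^2 + r⁻¹*(d*t^2 + 4*r*t + d)*(2*(P₀.2-A.2)*t - (P₀.1-A.1)*(t^2-1)) := by
    intro t; simp [hp2, hqP]
  have hqne : qP ≠ 0 := by
    intro h0
    have h4 : qP.eval 1 = 4 := by rw [hqEval]; norm_num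
    rw [h0] at h4
    simp at h4
  have hC1 : ∀ t : K, 1 + t^2 ≠ 0 → qP.eval t ≠ 0 := by
    intro t h
    rw [hqEval]
    exact pow_ne_zero _ h
  set P : RatFunc K × RatFunc K :=
    (algebraMap (Polynomial K) (RatFunc K) p1 / algebraMap _ _ qP,
     algebraMap (Polynomial K) (RatFunc K) p2 / algebraMap _ _ qP) with hPdef
  have hRP : ∀ t : K, 1 + t^2 ≠ 0 →
      PolesAvoided P t ∧ ratPoint P t = (p1.eval t / qP.eval t, p2.eval t / qP.eval t) :=
    fun t h => ratPoint_div p1 p2 qP hqne t (hC1 t h)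
  -- membership of the parametrized points in π₁(incidence)
  have hmem : ∀ t : K, t ≠ 0 → 1 + t^2 ≠ 0 →
      ratPoint P t ∈ Prod.fst '' incidence f A d := by
    intro t ht0 hu
    have h4 : (4:K) ≠ 0 := by norm_num
    have h4rt : 4*r*t ≠ 0 := mul_ne_zero (mul_ne_zero h4 hr) ht0
    refine ⟨(ratPoint P t,
      (A.1 + 4*t*(2*t*(P₀.1-A.1) + (t^2-1)*(P₀.2-A.2))/(1+t^2)^2,
       A.2 + 4*t*(2*t*(P₀.2-A.2) - (t^2-1)*(P₀.1-A.1))/(1+t^2)^2),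
      (4*r*t + d*(1+t^2))/(4*r*t)), ⟨?_, ?_, ?_⟩, rfl⟩
    · rw [hC]
      show normSq _ = r^2
      simp only [normSq, Prod.fst_sub, Prod.snd_sub]
      linear_combination fwd_circ (P₀.1-A.1) (P₀.2-A.2) r t hN' hu
    · show normSq (ratPoint P t - _) = d^2
      rw [(hRP t hu).2]
      simp only [normSq, Prod.fst_sub, Prod.snd_sub]
      rw [hp1Eval, hp2Eval, hqEval]
      linear_combination fwd_dist A.1 A.2 (P₀.1-A.1) (P₀.2-A.2) r d t hr hN' hu
    · show ratPoint P t = _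
      rw [(hRP t hu).2]
      have e1 := fwd_line A.1 (P₀.1-A.1) (P₀.2-A.2) r d t hr h4rt hu
      have e2 := fwd_line2 A.2 (P₀.1-A.1) (P₀.2-A.2) r d t hr h4rt hu
      refine Prod.ext ?_ ?_
      · show p1.eval t / qP.eval t = _
        simp only [Prod.fst_add, Prod.smul_fst, smul_eq_mul, Prod.fst_sub]
        rw [hp1Eval, hqEval]
        linear_combination e1
      · show p2.eval t / qP.eval t = _
        simp only [Prod.snd_add, Prod.smul_snd, smul_eq_mul, Prod.snd_sub]
        rw [hp2Eval, hqEval]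
        linear_combination e2
  -- every point of π₁(incidence) is a parametrized point
  have hrev : Prod.fst '' incidence f A d ⊆ paramImage P := by
    rintro x ⟨⟨x', y, lam⟩, ⟨hy, hdist, hline⟩, rfl⟩
    rw [hC] at hy
    have hy' : (y.1 - P₀.1)*(y.1 - P₀.1) + (y.2 - P₀.2)*(y.2 - P₀.2) = r^2 := hy
    have hline' : x' = A + lam • (y - A) := hline
    have hx1 : x'.1 = A.1 + lam * (y.1 - A.1) := by
      rw [hline']; simp [smul_eq_mul]
    have hx2 : x'.2 = A.2 + lam * (y.2 - A.2) := by
      rw [hline']; simp [smul_eq_mul]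
    have hdist' : (x'.1 - y.1)*(x'.1 - y.1) + (x'.2 - y.2)*(x'.2 - y.2) = d^2 := hdist
    have hE2 : (lam - 1)^2 * ((y.1-A.1)^2 + (y.2-A.2)^2) = d^2 := by
      linear_combination hdist' - ((lam-1)*(y.1-A.1) + (x'.1-y.1))*hx1
        - ((lam-1)*(y.2-A.2) + (x'.2-y.2))*hx2
    have hlam : lam - 1 ≠ 0 := by
      intro h0
      apply hd
      have hdd : d^2 = 0 := by rw [← hE2, h0]; ring
      exact pow_eq_zero_iff (two_ne_zero) |>.mp hdd
    have h2r : (2:K)*r*(lam-1) ≠ 0 := mul_ne_zero (mul_ne_zero two_ne_zero hr) hlam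
    set s : K := d / (2*r*(lam-1)) with hs
    have hs0 : s ≠ 0 := div_ne_zero hd h2r
    have hsEq' : s * (2*r*(lam-1)) = d := div_mul_cancel₀ d h2r
    have hsEq : 2*r*s*(lam-1) = d := by linear_combination hsEq'
    have hzz : (y.1-A.1)^2 + (y.2-A.2)^2
        = 2*((y.1-A.1)*(P₀.1-A.1) + (y.2-A.2)*(P₀.2-A.2)) := by
      linear_combination hy' - hN'
    have hsq : (lam-1)^2 * (4*r^2*s^2) = (lam-1)^2 * ((y.1-A.1)^2 + (y.2-A.2)^2) := by
      linear_combination (2*r*s*(lam-1) + d)*hsEq - hE2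
    have h4rs : 4*r^2*s^2 = (y.1-A.1)^2 + (y.2-A.2)^2 :=
      mul_left_cancel₀ (pow_ne_zero 2 hlam) hsq
    have h2rs : (2:K)*r^2*s ≠ 0 :=
      mul_ne_zero (mul_ne_zero two_ne_zero (pow_ne_zero 2 hr)) hs0
    set c : K := ((y.2-A.2)*(P₀.1-A.1) - (y.1-A.1)*(P₀.2-A.2)) / (2*r^2*s) with hcdef
    have hcEq : c*(2*r^2*s) = (y.2-A.2)*(P₀.1-A.1) - (y.1-A.1)*(P₀.2-A.2) :=
      div_mul_cancel₀ _ h2rs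
    have hI1 : ((y.1-A.1)*(P₀.1-A.1) + (y.2-A.2)*(P₀.2-A.2))^2
        + ((y.2-A.2)*(P₀.1-A.1) - (y.1-A.1)*(P₀.2-A.2))^2
        = ((y.1-A.1)^2+(y.2-A.2)^2) * r^2 := by
      linear_combination ((y.1-A.1)^2+(y.2-A.2)^2) * hN'
    have h2rs2 : 2*r^2*s^2 = (y.1-A.1)*(P₀.1-A.1) + (y.2-A.2)*(P₀.2-A.2) := by
      linear_combination h4rs/2 + hzz/2
    have h4r4s2 : (4:K)*r^4*s^2 ≠ 0 := by
      have : (4:K) ≠ 0 := by norm_num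
      exact mul_ne_zero (mul_ne_zero this (pow_ne_zero 4 hr)) (pow_ne_zero 2 hs0)
    have hscmul : (s^2 + c^2)*(4*r^4*s^2) = 1*(4*r^4*s^2) := by
      linear_combination (c*(2*r^2*s) + ((y.2-A.2)*(P₀.1-A.1) - (y.1-A.1)*(P₀.2-A.2))) * hcEq
        + (2*r^2*s^2 + ((y.1-A.1)*(P₀.1-A.1) + (y.2-A.2)*(P₀.2-A.2))) * h2rs2
        + hI1 - r^2 * h4rs
    have hsc : s^2 + c^2 = 1 := mul_right_cancel₀ h4r4s2 hscmul
    have hc1 : 1 + c ≠ 0 := by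
      intro h0
      apply hs0
      have hss : s^2 = 0 := by linear_combination hsc - (c-1)*h0
      exact pow_eq_zero_iff (two_ne_zero) |>.mp hss
    set t : K := s / (1+c) with htdef
    have htEq : t*(1+c) = s := div_mul_cancel₀ _ hc1
    have ht0 : t ≠ 0 := by
      intro h0; apply hs0; rw [← htEq, h0, zero_mul]
    have e2 : s*t = 1 - c := by
      have hh : (1+c)*(s*t) = (1+c)*(1-c) := by linear_combination s*htEq + hsc
      exact mul_left_cancel₀ hc1 hh
    have e3 : (1+t^2)*(1+c) = 2 := by linear_combination t*htEq + e2
    have hu : 1 + t^2 ≠ 0 := by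
      intro h0
      apply (two_ne_zero : (2:K) ≠ 0)
      rw [← e3, h0, zero_mul]
    have hs_t : s*(1+t^2) = 2*t := by linear_combination (-(1+t^2))*htEq + t*e3
    have hc_t : c*(1+t^2) = 1 - t^2 := by linear_combination e3
    have R1' : d*(1+t^2) = 4*r*t*(lam-1) := by
      linear_combination (-(1+t^2))*hsEq + 2*r*(lam-1)*hs_t
    have hI2 : (y.1-A.1)*r^2
        = ((y.1-A.1)*(P₀.1-A.1) + (y.2-A.2)*(P₀.2-A.2))*(P₀.1-A.1)
          - ((y.2-A.2)*(P₀.1-A.1) - (y.1-A.1)*(P₀.2-A.2))*(P₀.2-A.2) := by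
      linear_combination -(y.1-A.1)*hN'
    have hI3 : (y.2-A.2)*r^2
        = ((y.1-A.1)*(P₀.1-A.1) + (y.2-A.2)*(P₀.2-A.2))*(P₀.2-A.2)
          + ((y.2-A.2)*(P₀.1-A.1) - (y.1-A.1)*(P₀.2-A.2))*(P₀.1-A.1) := by
      linear_combination -(y.2-A.2)*hN'
    have hz1b' : (y.1-A.1)*r^2 = (2*s^2*(P₀.1-A.1) - 2*s*c*(P₀.2-A.2))*r^2 := by
      linear_combination hI2 - (P₀.1-A.1)*h2rs2 + (P₀.2-A.2)*hcEq
    have hz1b : (y.1-A.1) = 2*s^2*(P₀.1-A.1) - 2*s*c*(P₀.2-A.2) :=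
      mul_right_cancel₀ (pow_ne_zero 2 hr) hz1b'
    have hz2b' : (y.2-A.2)*r^2 = (2*s^2*(P₀.2-A.2) + 2*s*c*(P₀.1-A.1))*r^2 := by
      linear_combination hI3 - (P₀.2-A.2)*h2rs2 - (P₀.1-A.1)*hcEq
    have hz2b : (y.2-A.2) = 2*s^2*(P₀.2-A.2) + 2*s*c*(P₀.1-A.1) :=
      mul_right_cancel₀ (pow_ne_zero 2 hr) hz2b'
    have hz1 : (y.1-A.1)*(1+t^2)^2 = 8*t^2*(P₀.1-A.1) - 4*t*(1-t^2)*(P₀.2-A.2) := by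
      linear_combination (1+t^2)^2*hz1b
        + (2*(P₀.1-A.1)*(s*(1+t^2)+2*t) - 2*(P₀.2-A.2)*c*(1+t^2))*hs_t
        - 4*(P₀.2-A.2)*t*hc_t
    have hz2 : (y.2-A.2)*(1+t^2)^2 = 8*t^2*(P₀.2-A.2) + 4*t*(1-t^2)*(P₀.1-A.1) := by
      linear_combination (1+t^2)^2*hz2b
        + (2*(P₀.2-A.2)*(s*(1+t^2)+2*t) + 2*(P₀.1-A.1)*c*(1+t^2))*hs_t
        + 4*(P₀.1-A.1)*t*hc_t
    refine ⟨t, (hRP t hu).1, ?_⟩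
    rw [(hRP t hu).2]
    have g1 := rev_line1 A.1 (P₀.1-A.1) (P₀.2-A.2) r d lam (y.1-A.1) t hr hu R1' hz1
    have g2 := rev_line2 A.2 (P₀.1-A.1) (P₀.2-A.2) r d lam (y.2-A.2) t hr hu R1' hz2
    refine Prod.ext ?_ ?_
    · show x'.1 = p1.eval t / qP.eval t
      rw [hp1Eval, hqEval, hx1]
      linear_combination -g1
    · show x'.2 = p2.eval t / qP.eval t
      rw [hp2Eval, hqEval, hx2]
      linear_combination -g2
  -- the set of good parameters is infinite
  have hTinf : {t : K | t ≠ 0 ∧ 1 + t^2 ≠ 0}.Infinite := by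
    have hpoly : (Polynomial.X * (1 + Polynomial.X^2) : Polynomial K) ≠ 0 := by
      intro h0
      have h1 := congrArg (Polynomial.eval 1) h0
      simp at h1
    have hfin : {t : K | ¬(t ≠ 0 ∧ 1 + t^2 ≠ 0)}.Finite := by
      refine (Polynomial.finite_setOf_isRoot hpoly).subset ?_
      intro t ht
      simp only [Set.mem_setOf_eq, not_and_or, not_not] at ht
      show (Polynomial.X * (1 + Polynomial.X^2) : Polynomial K).IsRoot t
      simp only [Polynomial.IsRoot, Polynomial.eval_mul, Polynomial.eval_add,
        Polynomial.eval_one, Polynomial.eval_pow, Polynomial.eval_X]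
      rcases ht with h | h
      · rw [h, zero_mul]
      · rw [h, mul_zero]
    have h2 := hfin.infinite_compl
    refine h2.mono ?_
    intro t ht
    simpa using ht
  -- main vanishing transfer
  have hkey : ∀ g : MvPolynomial (Fin 2) K,
      (∀ t ∈ {t : K | t ≠ 0 ∧ 1 + t^2 ≠ 0},
        MvPolynomial.eval ![(ratPoint P t).1, (ratPoint P t).2] g = 0) →
      MvPolynomial.aeval ![P.1, P.2] g = 0 := by
    intro g hg
    apply aeval_eq_zero_of_vanish p1 p2 qP hqne hTinf (fun t ht => hC1 t ht.2)
    intro t ht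
    have h1 := hg t ht
    rw [(hRP t ht.2).2] at h1
    exact h1
  have hPiK : ∀ g : MvPolynomial (Fin 2) K,
      (∀ y ∈ Prod.fst '' incidence f A d, MvPolynomial.eval ![y.1, y.2] g = 0) →
      MvPolynomial.aeval ![P.1, P.2] g = 0 := by
    intro g hg
    apply hkey
    intro t ht
    exact hg _ (hmem t ht.1 ht.2)
  -- paramImage P ⊆ conchoid
  have hsub1 : paramImage P ⊆ conchoid f A d := by
    intro x hx g hg
    exact vanish_on_paramImage (hPiK g hg) x hx
  -- conchoid ⊆ zClosure (paramImage P)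
  have hsub2 : conchoid f A d ⊆ zClosure (paramImage P) :=
    zClosure_mono hrev
  -- a point on the conchoid
  have hone : (1:K) + 1^2 ≠ 0 := by norm_num
  have hpt : ratPoint P 1 ∈ conchoid f A d :=
    hsub1 ⟨1, (hRP 1 hone).1, rfl⟩
  constructor
  · -- irreducibility
    constructor
    · exact ⟨ratPoint P 1, hpt⟩
    · intro F₁ F₂ hF₁ hF₂ hcov
      have hmain : ∀ F : Set (K × K), IsZClosed F →
          ({t ∈ {t : K | t ≠ 0 ∧ 1 + t^2 ≠ 0} | ratPoint P t ∈ F}).Infinite →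
          conchoid f A d ⊆ F := by
        intro F hF hinf x hx
        apply hF
        intro g hg
        apply hx
        intro y hy
        have h0 : MvPolynomial.aeval ![P.1, P.2] g = 0 := by
          apply aeval_eq_zero_of_vanish p1 p2 qP hqne hinf
            (fun t ht => hC1 t ht.1.2)
          intro t ht
          have h1 := hg _ ht.2
          rw [(hRP t ht.1.2).2] at h1
          exact h1
        exact vanish_on_paramImage h0 y (hrev hy)
      have hsplit : {t ∈ {t : K | t ≠ 0 ∧ 1 + t^2 ≠ 0} | ratPoint P t ∈ F₁}.Infinite ∨
          {t ∈ {t : K | t ≠ 0 ∧ 1 + t^2 ≠ 0} | ratPoint P t ∈ F₂}.Infinite := by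
        by_contra hcon
        push_neg at hcon
        obtain ⟨h1, h2⟩ := hcon
        apply hTinf
        refine (h1.union h2).subset ?_
        intro t ht
        have hmem' : ratPoint P t ∈ F₁ ∪ F₂ :=
          hcov (hsub1 ⟨t, (hRP t ht.2).1, rfl⟩)
        rcases hmem' with h | h
        · exact Or.inl ⟨ht, h⟩
        · exact Or.inr ⟨ht, h⟩
      rcases hsplit with h | h
      · exact Or.inl (hmain F₁ hF₁ h)
      · exact Or.inr (hmain F₂ hF₂ h)
  · -- rationality
    refine ⟨P, ?_, hsub1, hsub2⟩
    rintro ⟨cc, hc1', hc2'⟩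
    have hk : ∀ t : K, ratPoint P t = (cc.1, cc.2) := by
      intro t
      have hc1'' : algebraMap (Polynomial K) (RatFunc K) p1 / algebraMap _ _ qP
          = RatFunc.C cc.1 := hc1'
      have hc2'' : algebraMap (Polynomial K) (RatFunc K) p2 / algebraMap _ _ qP
          = RatFunc.C cc.2 := hc2'
      simp only [ratPoint, hc1', hc2', hc1'', hc2'', RatFunc.num_C, RatFunc.denom_C,
        Polynomial.eval_C, Polynomial.eval_one, div_one]
    have hm1 : (1:K) + (-1)^2 ≠ 0 := by norm_num
    have hv1 := (hRP 1 hone).2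
    have hv2 := (hRP (-1) hm1).2
    rw [hk 1] at hv1
    rw [hk (-1)] at hv2
    have hq1 : qP.eval 1 = 4 := by rw [hqEval]; norm_num
    have hq2 : qP.eval (-1) = 4 := by rw [hqEval]; norm_num
    have hw1 : cc.1 = p1.eval 1 / 4 := by rw [← hq1]; exact congrArg Prod.fst hv1
    have hw2 : cc.1 = p1.eval (-1) / 4 := by rw [← hq2]; exact congrArg Prod.fst hv2
    have hw3 : cc.2 = p2.eval 1 / 4 := by rw [← hq1]; exact congrArg Prod.snd hv1
    have hw4 : cc.2 = p2.eval (-1) / 4 := by rw [← hq2]; exact congrArg Prod.snd hv2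
    have he1 : p1.eval 1 = p1.eval (-1) := by
      have h := hw1.symm.trans hw2
      field_simp at h
      exact h
    have he2 : p2.eval 1 = p2.eval (-1) := by
      have h := hw3.symm.trans hw4
      field_simp at h
      exact h
    rw [hp1Eval, hp1Eval] at he1
    rw [hp2Eval, hp2Eval] at he2
    have hn1 : P₀.1 - A.1 = 0 := by
      have h8 : (8:K)*d ≠ 0 := by
        refine mul_ne_zero (by norm_num) hd
      have hh : r⁻¹ * (8*d*(P₀.1 - A.1)) = 0 := by linear_combination he1
      rw [inv_mul_eq_div, _root_.div_eq_zero_iff] at hh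
      rcases hh with h | h
      · exact (mul_eq_zero.mp h).resolve_left h8
      · exact absurd h hr
    have hn2 : P₀.2 - A.2 = 0 := by
      have h8 : (8:K)*d ≠ 0 := by
        refine mul_ne_zero (by norm_num) hd
      have hh : r⁻¹ * (8*d*(P₀.2 - A.2)) = 0 := by linear_combination he2
      rw [inv_mul_eq_div, _root_.div_eq_zero_iff] at hh
      rcases hh with h | h
      · exact (mul_eq_zero.mp h).resolve_left h8
      · exact absurd h hr
    apply hr
    have : r^2 = 0 := by rw [← hN', hn1, hn2]; ring
    exact pow_eq_zero_iff (two_ne_zero) |>.mp this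


end ConchoidPaper
end
end

section
/- Let P(t) = (p₁(t)/p(t), p₂(t)/p(t)) be a proper rational parametrization of C with gcd(p₁, p₂, p) = 1, and let A₀ = (a₀, b₀) ∈ K². If the polynomial (p₁(t) − a₀·p(t))² + (p₂(t) − b₀·p(t))² is a constant of K, then C is a line passing through A₀. Consequently, if C is not a line through A₀, then (p₁(t) − a₀·p(t))² + (p₂(t) − b₀·p(t))² is a nonconstant polynomial in t. -/
noncomputable section

namespace ConchoidPaper

open Polynomial

variable {K : Type*} [Field K]

private lemma linrel {K : Type*} [Field K] [IsAlgClosed K] [CharZero K]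
    (q₁ q₂ : Polynomial K) (c : K)
    (h : q₁ ^ 2 + q₂ ^ 2 = Polynomial.C c) :
    ∃ u v : K, (u ≠ 0 ∨ v ≠ 0) ∧ Polynomial.C u * q₁ + Polynomial.C v * q₂ = 0 := by
  obtain ⟨s, hs⟩ := IsAlgClosed.exists_pow_nat_eq (-1 : K) (n := 2) (by norm_num)
  have hs0 : s ≠ 0 := by intro h0; rw [h0] at hs; norm_num at hs
  have hCs : (Polynomial.C s) ^ 2 = -1 := by rw [← map_pow, hs, map_neg, map_one]
  have hfac : (q₁ + Polynomial.C s * q₂) * (q₁ - Polynomial.C s * q₂) = Polynomial.C c := by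
    linear_combination h - q₂ ^ 2 * hCs
  by_cases hc : c = 0
  · rw [hc, map_zero] at hfac
    rcases mul_eq_zero.mp hfac with h1 | h1
    · exact ⟨1, s, Or.inl one_ne_zero, by rw [map_one, one_mul]; linear_combination h1⟩
    · exact ⟨1, -s, Or.inl one_ne_zero, by rw [map_one, one_mul, map_neg]; linear_combination h1⟩
  · have hu : IsUnit (Polynomial.C c) := (Polynomial.isUnit_C).mpr (isUnit_iff_ne_zero.mpr hc)
    have hA : IsUnit (q₁ + Polynomial.C s * q₂) := isUnit_of_mul_isUnit_left (hfac ▸ hu)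
    have hB : IsUnit (q₁ - Polynomial.C s * q₂) := isUnit_of_mul_isUnit_right (hfac ▸ hu)
    obtain ⟨a, -, hA'⟩ := Polynomial.isUnit_iff.mp hA
    obtain ⟨b, -, hB'⟩ := Polynomial.isUnit_iff.mp hB
    refine ⟨a - b, -((a + b) * s), ?_, ?_⟩
    · by_contra hcon
      push_neg at hcon
      obtain ⟨h1, h2⟩ := hcon
      have hab : a = b := sub_eq_zero.mp h1
      have hsum : a + b = 0 := by
        rcases mul_eq_zero.mp (neg_eq_zero.mp h2) with h' | h'
        · exact h'
        · exact absurd h' hs0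
      have ha0 : a = 0 := add_self_eq_zero.mp (by linear_combination hsum + h1)
      have hq : q₁ + Polynomial.C s * q₂ = 0 := by rw [← hA', ha0, map_zero]
      have : Polynomial.C c = 0 := by rw [← hfac, hq, zero_mul]
      exact hc (Polynomial.C_eq_zero.mp this)
    · simp only [map_sub, map_neg, map_mul, map_add]
      linear_combination q₁ * hA' - q₁ * hB' - Polynomial.C s * q₂ * hA'
        - Polynomial.C s * q₂ * hB'

private lemma eval_on_line {K : Type*} [Field K] (p₁ p₂ p : Polynomial K) (hp : p ≠ 0)
    (u v a b : K) (P₁ P₂ : RatFunc K)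
    (hP₁ : P₁ = algebraMap (Polynomial K) (RatFunc K) p₁ /
        algebraMap (Polynomial K) (RatFunc K) p)
    (hP₂ : P₂ = algebraMap (Polynomial K) (RatFunc K) p₂ /
        algebraMap (Polynomial K) (RatFunc K) p)
    (hrel : Polynomial.C u * (p₁ - Polynomial.C a * p) +
        Polynomial.C v * (p₂ - Polynomial.C b * p) = 0)
    (t : K) (h1 : P₁.denom.eval t ≠ 0) (h2 : P₂.denom.eval t ≠ 0) :
    u * (P₁.num.eval t / P₁.denom.eval t - a) + v * (P₂.num.eval t / P₂.denom.eval t - b)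
      = 0 := by
  set φ := algebraMap (Polynomial K) (RatFunc K) with hφ
  have hφp : φ p ≠ 0 := RatFunc.algebraMap_ne_zero hp
  have hline : RatFunc.C u * (P₁ - RatFunc.C a) + RatFunc.C v * (P₂ - RatFunc.C b) = 0 := by
    have hrel' := congrArg φ hrel
    simp only [map_add, map_mul, map_sub, map_zero, hφ, RatFunc.algebraMap_C] at hrel'
    rw [hP₁, hP₂]
    field_simp
    linear_combination hrel'
  have hnum1 : φ P₁.num = P₁ * φ P₁.denom :=
    (div_eq_iff (RatFunc.algebraMap_ne_zero (RatFunc.denom_ne_zero P₁))).mp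
      (RatFunc.num_div_denom P₁)
  have hnum2 : φ P₂.num = P₂ * φ P₂.denom :=
    (div_eq_iff (RatFunc.algebraMap_ne_zero (RatFunc.denom_ne_zero P₂))).mp
      (RatFunc.num_div_denom P₂)
  have hg : (Polynomial.C u * (P₁.num - Polynomial.C a * P₁.denom) * P₂.denom
      + Polynomial.C v * (P₂.num - Polynomial.C b * P₂.denom) * P₁.denom) = 0 := by
    apply IsFractionRing.injective (Polynomial K) (RatFunc K)
    simp only [map_add, map_mul, map_sub, map_zero, RatFunc.algebraMap_C]
    rw [hnum1, hnum2]
    linear_combination (φ P₁.denom * φ P₂.denom) * hline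
  have he := congrArg (Polynomial.eval t) hg
  simp only [Polynomial.eval_add, Polynomial.eval_mul, Polynomial.eval_sub,
    Polynomial.eval_C, Polynomial.eval_zero] at he
  field_simp
  linear_combination he

private lemma fiber_finite {K : Type*} [Field K] (Q : RatFunc K) (x : K)
    (hQ : Q ≠ RatFunc.C x) :
    {t : K | Q.denom.eval t ≠ 0 ∧ Q.num.eval t / Q.denom.eval t = x}.Finite := by
  have hr : Q.num - Polynomial.C x * Q.denom ≠ 0 := by
    intro h0
    apply hQ
    have hnum : Q.num = Polynomial.C x * Q.denom := by linear_combination h0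
    rw [← RatFunc.num_div_denom Q, hnum, map_mul, RatFunc.algebraMap_C,
      mul_div_assoc, div_self (RatFunc.algebraMap_ne_zero (RatFunc.denom_ne_zero Q)), mul_one]
  apply (Polynomial.finite_setOf_isRoot hr).subset
  rintro t ⟨hd, hv⟩
  have hnum := (div_eq_iff hd).mp hv
  simp [Polynomial.IsRoot, hnum]

/-- Lemma 4 of the paper. If `(p₁ − a₀p)² + (p₂ − b₀p)²` is a
constant, then `C` is a line through `A₀`; consequently if `C` is not a line through
`A₀`, this polynomial is nonconstant. -/
theorem line_through_focus_of_constant_distance_polynomial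
    [IsAlgClosed K] [CharZero K]
    (f : MvPolynomial (Fin 2) K) (hf : Irreducible f)
    (p₁ p₂ p : Polynomial K) (hp : p ≠ 0)
    (hgcd : ∀ q : Polynomial K, q ∣ p₁ → q ∣ p₂ → q ∣ p → IsUnit q)
    (P : RatFunc K × RatFunc K)
    (hP₁ : P.1 = algebraMap (Polynomial K) (RatFunc K) p₁ /
        algebraMap (Polynomial K) (RatFunc K) p)
    (hP₂ : P.2 = algebraMap (Polynomial K) (RatFunc K) p₂ /
        algebraMap (Polynomial K) (RatFunc K) p)
    (hparam : IsParamOf (zeroSet f) P) (hproper : IsProper P)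
    (A₀ : K × K) :
    ((∃ c : K,
        (p₁ - Polynomial.C A₀.1 * p) ^ 2 + (p₂ - Polynomial.C A₀.2 * p) ^ 2 =
          Polynomial.C c) →
       IsLineThrough (zeroSet f) A₀) ∧
    (¬ IsLineThrough (zeroSet f) A₀ →
       ∀ c : K,
         (p₁ - Polynomial.C A₀.1 * p) ^ 2 + (p₂ - Polynomial.C A₀.2 * p) ^ 2 ≠
           Polynomial.C c) := by
  obtain ⟨a, b⟩ := A₀
  dsimp only
  have main : (∃ c : K, (p₁ - Polynomial.C a * p) ^ 2 + (p₂ - Polynomial.C b * p) ^ 2 =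
      Polynomial.C c) → IsLineThrough (zeroSet f) (a, b) := by
    rintro ⟨c, hc⟩
    obtain ⟨u, v, huv, hrel⟩ := linrel _ _ c hc
    have himgL : ∀ x ∈ paramImage P, u * (x.1 - a) + v * (x.2 - b) = 0 := by
      rintro x ⟨t, ⟨h1, h2⟩, rfl⟩
      exact eval_on_line p₁ p₂ p hp u v a b P.1 P.2 hP₁ hP₂ hrel t h1 h2
    refine ⟨u, v, huv, ?_⟩
    apply Set.Subset.antisymm
    · intro x hx
      have hz := hparam.2.2 hx
      have hval := hz (MvPolynomial.C u * (MvPolynomial.X 0 - MvPolynomial.C a)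
          + MvPolynomial.C v * (MvPolynomial.X 1 - MvPolynomial.C b)) ?_
      · simpa using hval
      · intro y hy
        simpa using himgL y hy
    · set φℓ : K → K × K := fun s => (a + v * s, b - u * s) with hφℓ
      have hrange : {y : K × K | u * (y.1 - a) + v * (y.2 - b) = 0} ⊆ Set.range φℓ := by
        intro y hy
        simp only [Set.mem_setOf_eq] at hy
        rcases eq_or_ne v 0 with hv | hv
        · have hu : u ≠ 0 := huv.resolve_right fun h => h hv
          refine ⟨(b - y.2) / u, ?_⟩
          have hy1 : y.1 = a := by
            rw [hv] at hy
            have h0 : u * (y.1 - a) = 0 := by linear_combination hy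
            rcases mul_eq_zero.mp h0 with h | h
            · exact absurd h hu
            · linear_combination h
          have : φℓ ((b - y.2) / u) = (a + v * ((b - y.2) / u), b - u * ((b - y.2) / u)) := rfl
          rw [this]
          apply Prod.ext
          · simp [hv, hy1]
          · field_simp
            ring
        · refine ⟨(y.1 - a) / v, ?_⟩
          have : φℓ ((y.1 - a) / v) = (a + v * ((y.1 - a) / v), b - u * ((y.1 - a) / v)) := rfl
          rw [this]
          apply Prod.ext
          · field_simp
            ring
          · field_simp
            linear_combination -hy
      have hnc : (∀ c1 : K, P.1 ≠ RatFunc.C c1) ∨ (∀ c2 : K, P.2 ≠ RatFunc.C c2) := by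
        by_contra hcon
        push_neg at hcon
        obtain ⟨⟨c1, h1⟩, ⟨c2, h2⟩⟩ := hcon
        exact hparam.1 ⟨(c1, c2), h1, h2⟩
      have hTinf : {t : K | PolesAvoided P t}.Infinite := by
        have h1 := Polynomial.finite_setOf_isRoot (RatFunc.denom_ne_zero P.1)
        have h2 := Polynomial.finite_setOf_isRoot (RatFunc.denom_ne_zero P.2)
        apply ((h1.union h2).infinite_compl).mono
        intro t ht
        simp only [Set.mem_compl_iff, Set.mem_union, Set.mem_setOf_eq, not_or,
          Polynomial.IsRoot] at ht
        exact ⟨ht.1, ht.2⟩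
      have hParamInf : (paramImage P).Infinite := by
        by_contra h
        rw [Set.not_infinite] at h
        rcases hnc with hn | hn
        · apply hTinf
          apply (h.biUnion (fun x _ => fiber_finite P.1 x.1 (hn x.1))).subset
          intro t ht
          exact Set.mem_biUnion ⟨t, ht, rfl⟩ ⟨ht.1, rfl⟩
        · apply hTinf
          apply (h.biUnion (fun x _ => fiber_finite P.2 x.2 (hn x.2))).subset
          intro t ht
          exact Set.mem_biUnion ⟨t, ht, rfl⟩ ⟨ht.2, rfl⟩
      have hsub : paramImage P ⊆ Set.range φℓ := fun x hx => hrange (himgL x hx)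
      have hpre : (φℓ ⁻¹' paramImage P).Infinite := hParamInf.preimage hsub
      set g : Fin 2 → Polynomial K := ![Polynomial.C a + Polynomial.C v * Polynomial.X,
        Polynomial.C b - Polynomial.C u * Polynomial.X] with hgdef
      set F : Polynomial K := MvPolynomial.eval₂ Polynomial.C g f with hFdef
      have heval : ∀ s : K, F.eval s = MvPolynomial.eval ![a + v * s, b - u * s] f := by
        intro s
        have h := MvPolynomial.eval₂_comp_left (Polynomial.evalRingHom s) Polynomial.C g f
        have h1 : (Polynomial.evalRingHom s).comp Polynomial.C = RingHom.id K := by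
          ext x; simp
        have h2 : (⇑(Polynomial.evalRingHom s) ∘ g) = ![a + v * s, b - u * s] := by
          funext i
          fin_cases i <;> simp [hgdef]
        rw [h1, h2] at h
        exact h
      have hFroot : (φℓ ⁻¹' paramImage P) ⊆ {s : K | F.IsRoot s} := by
        intro s hs
        have hzf : φℓ s ∈ zeroSet f := hparam.2.1 hs
        show F.eval s = 0
        rw [heval s]
        exact hzf
      have hF0 : F = 0 := Polynomial.eq_zero_of_infinite_isRoot F (hpre.mono hFroot)
      intro y hy
      obtain ⟨s, hs⟩ := hrange hy
      show MvPolynomial.eval ![y.1, y.2] f = 0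
      rw [← hs]
      show MvPolynomial.eval ![a + v * s, b - u * s] f = 0
      rw [← heval s, hF0, Polynomial.eval_zero]
  exact ⟨main, fun hnot c hc => absurd (main ⟨c, hc⟩) hnot⟩

end ConchoidPaper
end
end
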